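/- For any nonzero positive semidefinite matrix P ∈ M_N(ℂ) with largest eigenvalue λ, one has λ·Tr(P)/Tr(P²) ≤ (1+√N)/2. -/

import Mathlib

open Matrix
open scoped ComplexOrder

/-- For any nonzero positive semidefinite `P ∈ M_N(ℂ)` with largest eigenvalue `λ`,
one has `λ·Tr(P)/Tr(P²) ≤ (1+√N)/2`. -/
theorem rho_upper_bound (N : ℕ) (hN : 0 < N) (P : Matrix (Fin N) (Fin N) ℂ)
    (hP : P.PosSemidef) (hP0 : P ≠ 0) :
    (⨆ i, hP.1.eigenvalues i) * (Matrix.trace P).re / (Matrix.trace (P ^ 2)).re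
      ≤ (1 + Real.sqrt N) / 2 := by
  have hH := hP.1
  set μ := hH.eigenvalues with hμ
  set U := (hH.eigenvectorUnitary : Matrix (Fin N) (Fin N) ℂ) with hUdef
  set D := Matrix.diagonal ((RCLike.ofReal ∘ hH.eigenvalues : Fin N → ℂ)) with hDdef
  have hU : star U * U = 1 := Matrix.mem_unitaryGroup_iff'.mp hH.eigenvectorUnitary.2
  have hcancel : ∀ X : Matrix (Fin N) (Fin N) ℂ, star U * (U * X) = X := fun X => by
    rw [← Matrix.mul_assoc, hU, Matrix.one_mul]
  have hspec : P = U * D * star U := hH.spectral_theorem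
  -- trace P = sum of eigenvalues
  have htr : (Matrix.trace P).re = ∑ i, μ i := by
    have h1 : Matrix.trace P = ∑ i, (μ i : ℂ) := by
      conv_lhs => rw [hspec]
      rw [Matrix.trace_mul_cycle, hU, Matrix.one_mul, hDdef, Matrix.trace_diagonal]
      simp
      rfl
    rw [h1, show (∑ i, ((μ i : ℝ) : ℂ)) = ((∑ i, μ i : ℝ) : ℂ) by push_cast; ring,
      Complex.ofReal_re]
  -- trace P² = sum of squares of eigenvalues
  have htr2 : (Matrix.trace (P ^ 2)).re = ∑ i, μ i ^ 2 := by
    have hPsq : P ^ 2 = U * (D * D) * star U := by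
      rw [pow_two]
      conv_lhs => rw [hspec]
      simp only [Matrix.mul_assoc]
      rw [hcancel]
    have h1 : Matrix.trace (P ^ 2) = ∑ i, (μ i : ℂ) ^ 2 := by
      rw [hPsq, Matrix.trace_mul_cycle, hU, Matrix.one_mul, hDdef,
        Matrix.diagonal_mul_diagonal, Matrix.trace_diagonal]
      simp [pow_two]
      rfl
    rw [h1, show (∑ i, ((μ i : ℝ) : ℂ) ^ 2) = ((∑ i, μ i ^ 2 : ℝ) : ℂ) by push_cast; ring,
      Complex.ofReal_re]
  have hμnn : ∀ i, 0 ≤ μ i := fun i => hP.eigenvalues_nonneg i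
  have : Nonempty (Fin N) := ⟨⟨0, hN⟩⟩
  obtain ⟨i₀, hi₀⟩ := Finite.exists_max μ
  have hsup : (⨆ i, μ i) = μ i₀ :=
    le_antisymm (ciSup_le hi₀) (le_ciSup (Set.Finite.bddAbove (Set.finite_range μ)) i₀)
  -- some eigenvalue is nonzero
  have hex : ∃ j, μ j ≠ 0 := by
    by_contra h
    push_neg at h
    apply hP0
    rw [hspec, show D = 0 by
      ext i j
      by_cases hij : i = j <;> simp [hDdef, Matrix.diagonal, hij, ← hμ, h]]
    simp
  obtain ⟨j, hj⟩ := hex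
  have hlpos : 0 < μ i₀ := lt_of_lt_of_le (lt_of_le_of_ne (hμnn j) (Ne.symm hj)) (hi₀ j)
  have hQpos : 0 < ∑ i, μ i ^ 2 := by
    have h2 : 0 < μ i₀ ^ 2 := by positivity
    exact lt_of_lt_of_le h2 (Finset.single_le_sum (fun i _ => sq_nonneg (μ i))
      (Finset.mem_univ i₀))
  rw [htr, htr2, hsup, div_le_iff₀ hQpos]
  have hS : ∑ i, μ i = μ i₀ + ∑ i ∈ Finset.univ.erase i₀, μ i :=
    (Finset.add_sum_erase _ _ (Finset.mem_univ i₀)).symm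
  have hQ : ∑ i, μ i ^ 2 = μ i₀ ^ 2 + ∑ i ∈ Finset.univ.erase i₀, μ i ^ 2 :=
    (Finset.add_sum_erase _ _ (Finset.mem_univ i₀)).symm
  set s := ∑ i ∈ Finset.univ.erase i₀, μ i with hs
  set q := ∑ i ∈ Finset.univ.erase i₀, μ i ^ 2 with hq
  have hsnn : 0 ≤ s := Finset.sum_nonneg fun i _ => hμnn i
  have hqnn : 0 ≤ q := Finset.sum_nonneg fun i _ => sq_nonneg _
  set r := Real.sqrt N with hr
  have hr1 : 1 ≤ r := by
    rw [hr, show (1 : ℝ) = Real.sqrt 1 by simp]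
    exact Real.sqrt_le_sqrt (by exact_mod_cast hN)
  have hr2 : r ^ 2 = N := Real.sq_sqrt (by positivity)
  have hcs : s ^ 2 ≤ (r ^ 2 - 1) * q := by
    have h3 := sq_sum_le_card_mul_sum_sq (s := Finset.univ.erase i₀) (f := μ)
    have hcard : (Finset.univ.erase i₀).card = N - 1 := by
      rw [Finset.card_erase_of_mem (Finset.mem_univ i₀)]
      simp
    rw [hcard] at h3
    calc s ^ 2 ≤ ((N - 1 : ℕ) : ℝ) * q := by exact_mod_cast h3
      _ ≤ (r ^ 2 - 1) * q := by
          apply mul_le_mul_of_nonneg_right _ hqnn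
          rw [hr2, Nat.cast_sub hN]
          simp
  rw [hS, hQ]
  rcases eq_or_lt_of_le hr1 with h | h
  · rw [← h] at hcs
    have hs0 : s = 0 := by nlinarith [sq_nonneg s, hcs, hsnn]
    rw [← h, hs0]
    linarith [hqnn, sq_nonneg (μ i₀)]
  · nlinarith [sq_nonneg (s - (r - 1) * μ i₀), hcs, sub_pos.mpr h, hqnn, hlpos,
      mul_pos (sub_pos.mpr h) hlpos]
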